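/- Let G be a countable discrete group acting by homeomorphisms on a locally compact metrizable topological space X. If the action is perfect, then the orbit space X/G, with the quotient topology, is metrizable. -/

import Mathlib

open Pointwise

section Auxiliary

open Set Topology TopologicalSpace


theorem aux_countable_reachable {α : Type*} (r : α → α → Prop) (a : α)
    (h : ∀ b, {c | r b c}.Countable) : {b | Relation.ReflTransGen r a b}.Countable := by
  let S : ℕ → Set α := fun n => Nat.rec {a} (fun _ S => S ∪ ⋃ b ∈ S, {c | r b c}) n
  have hS : ∀ n, (S n).Countable := by
    intro n
    induction n with
    | zero => exact countable_singleton a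
    | succ n ih => exact ih.union (ih.biUnion fun b _ => h b)
  have hsub : {b | Relation.ReflTransGen r a b} ⊆ ⋃ n, S n := by
    intro b hb
    induction hb with
    | refl => exact mem_iUnion.2 ⟨0, rfl⟩
    | tail _ hr ih =>
        obtain ⟨n, hn⟩ := mem_iUnion.1 ih
        exact mem_iUnion.2 ⟨n + 1, Or.inr (mem_biUnion hn hr)⟩
  exact (countable_iUnion hS).mono hsub

theorem aux_sc_subset {α : Type*} [TopologicalSpace α] {s t : Set α} (hst : s ⊆ t)
    (h : SecondCountableTopology t) : SecondCountableTopology s := by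
  haveI := h
  exact (IsEmbedding.inclusion hst).secondCountableTopology

theorem aux_sc_sUnion {α : Type*} [TopologicalSpace α] {S : Set (Set α)} (hc : S.Countable)
    (ho : ∀ s ∈ S, IsOpen s) (hsc : ∀ s ∈ S, SecondCountableTopology s) :
    SecondCountableTopology ↥(⋃₀ S) := by
  haveI := hc.to_subtype
  haveI : ∀ s : S, SecondCountableTopology
      ((Subtype.val : ↥(⋃₀ S) → α) ⁻¹' s.1) := by
    intro s
    haveI := hsc s.1 s.2
    let f : ((Subtype.val : ↥(⋃₀ S) → α) ⁻¹' s.1) → ↥(s.1) := fun z => ⟨z.1.1, z.2⟩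
    have key : IsEmbedding ((Subtype.val : ↥(s.1) → α) ∘ f) := by
      have heq : (Subtype.val : ↥(s.1) → α) ∘ f
          = (Subtype.val : ↥(⋃₀ S) → α) ∘
            (Subtype.val : ((Subtype.val : ↥(⋃₀ S) → α) ⁻¹' s.1) → ↥(⋃₀ S)) := rfl
      rw [heq]
      exact IsEmbedding.subtypeVal.comp IsEmbedding.subtypeVal
    have hfc : Continuous f :=
      (continuous_subtype_val.comp continuous_subtype_val).subtype_mk _
    exact (IsEmbedding.of_comp hfc continuous_subtype_val key).secondCountableTopology
  refine secondCountableTopology_of_countable_cover (ι := S)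
    (U := fun s => (Subtype.val : ↥(⋃₀ S) → α) ⁻¹' s.1)
    (fun s => (ho s.1 s.2).preimage continuous_subtype_val) ?_
  ext z
  simp only [mem_iUnion, mem_preimage, mem_univ, iff_true]
  obtain ⟨s, hs, hz⟩ := z.2
  exact ⟨⟨s, hs⟩, hz⟩

theorem aux_sc_image {α β : Type*} [TopologicalSpace α] [TopologicalSpace β] {p : α → β}
    (hc : Continuous p) (ho : IsOpenMap p) {A : Set α} (hA : IsOpen A)
    (h : SecondCountableTopology A) : SecondCountableTopology ↥(p '' A) := by
  haveI := h
  set f : ↥A → ↥(p '' A) := fun a => ⟨p a, a, a.2, rfl⟩ with hf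
  have hfc : Continuous f := (hc.comp continuous_subtype_val).subtype_mk _
  have hfs : Function.Surjective f := by
    rintro ⟨b, a, ha, rfl⟩
    exact ⟨⟨a, ha⟩, rfl⟩
  have hfo : IsOpenMap f := by
    intro U hU
    obtain ⟨V, hV, rfl⟩ := isOpen_induced_iff.mp hU
    have him : f '' (Subtype.val ⁻¹' V) =
        (Subtype.val : ↥(p '' A) → β) ⁻¹' (p '' (V ∩ A)) := by
      ext ⟨b, hb⟩
      constructor
      · rintro ⟨⟨a, haA⟩, haV, heq⟩
        exact ⟨a, ⟨haV, haA⟩, congrArg Subtype.val heq⟩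
      · rintro ⟨x, ⟨hxV, hxA⟩, hx⟩
        exact ⟨⟨x, hxA⟩, hxV, Subtype.ext hx⟩
    rw [him]
    exact (ho _ (hV.inter hA)).preimage continuous_subtype_val
  exact ((hfo.isQuotientMap hfc hfs).secondCountableTopology) hfo

theorem aux_metrizable_of_partition {β : Type*} [TopologicalSpace β] (cl : β → Set β)
    (hmem : ∀ b, b ∈ cl b) (hopen : ∀ b, IsOpen (cl b))
    (hglue : ∀ a b, b ∈ cl a → cl a = cl b)
    (hm : ∀ b, MetrizableSpace (cl b)) : MetrizableSpace β := by
  haveI : ∀ s : Set.range cl, MetrizableSpace ↥(s.1) := by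
    rintro ⟨s, b, rfl⟩
    exact hm b
  haveI : MetrizableSpace (Σ s : Set.range cl, ↥(s.1)) := by
    letI : ∀ s : Set.range cl, MetricSpace ↥(s.1) := fun s => metrizableSpaceMetric _
    letI := Metric.Sigma.metricSpace (E := fun s : Set.range cl => ↥(s.1))
    exact inferInstance
  let F : (Σ s : Set.range cl, ↥(s.1)) → β := fun z => z.2.1
  have hFc : Continuous F := continuous_sigma fun s => continuous_subtype_val
  have hFo : IsOpenMap F := isOpenMap_sigma.2 fun s => by
    obtain ⟨b, hb⟩ := s.2
    have : IsOpen s.1 := hb ▸ hopen b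
    exact this.isOpenMap_subtype_val
  have hFbij : Function.Bijective F := by
    constructor
    · intro z w h
      obtain ⟨⟨S, hS⟩, x, hx⟩ := z
      obtain ⟨⟨T, hT⟩, y, hy⟩ := w
      have hxy : x = y := h
      subst hxy
      have hST : S = T := by
        obtain ⟨b, rfl⟩ := hS
        obtain ⟨c, rfl⟩ := hT
        exact (hglue b x hx).trans (hglue c x hy).symm
      subst hST
      rfl
    · intro b
      exact ⟨⟨⟨cl b, b, rfl⟩, ⟨b, hmem b⟩⟩, rfl⟩
  let e : (Σ s : Set.range cl, ↥(s.1)) ≃ₜ β :=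
    (Equiv.ofBijective F hFbij).toHomeomorphOfContinuousOpen hFc hFo
  exact e.symm.isEmbedding.metrizableSpace

theorem aux_decomp {X : Type*} [TopologicalSpace X] [LocallyCompactSpace X]
    [MetrizableSpace X] :
    ∃ comp : X → Set X, (∀ x, x ∈ comp x) ∧ (∀ x, IsOpen (comp x)) ∧
      (∀ x, IsSigmaCompact (comp x)) ∧
      (∀ x y, y ∈ comp x → comp x = comp y) := by
  letI : MetricSpace X := metrizableSpaceMetric X
  obtain ⟨K, hKc, hKn⟩ : ∃ K : X → Set X, (∀ x, IsCompact (K x)) ∧ ∀ x, K x ∈ 𝓝 x := by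
    choose K h1 h2 using fun x : X => exists_compact_mem_nhds x
    exact ⟨K, h1, h2⟩
  have hcov : ⋃ x, interior (K x) = univ :=
    eq_univ_of_forall fun x => mem_iUnion.2 ⟨x, mem_interior_iff_mem_nhds.2 (hKn x)⟩
  obtain ⟨v, vo, vcov, vlf, vsub⟩ :=
    precise_refinement (fun x => interior (K x)) (fun _ => isOpen_interior) hcov
  have hvcl : ∀ i, IsCompact (closure (v i)) := fun i =>
    (hKc i).of_isClosed_subset isClosed_closure
      (closure_minimal ((vsub i).trans interior_subset) (hKc i).isClosed)
  set Rel : X → X → Prop := fun i j => (v i ∩ v j).Nonempty with hRel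
  have hRsymm : Symmetric Rel := fun i j ⟨z, h1, h2⟩ => ⟨z, h2, h1⟩
  have hRTGsymm : Symmetric (Relation.ReflTransGen Rel) := fun a b h =>
    (@Relation.ReflTransGen.symmetric _ Rel ⟨fun a b h => hRsymm h⟩).symm a b h
  have hbranch : ∀ i, {j | Rel i j}.Finite := by
    intro i
    apply (vlf.finite_nonempty_inter_compact (hvcl i)).subset
    rintro j ⟨z, hzi, hzj⟩
    exact ⟨z, hzj, subset_closure hzi⟩
  have hcovx : ∀ x : X, ∃ i, x ∈ v i := fun x => mem_iUnion.1 (vcov ▸ mem_univ x)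
  choose idx hidx using hcovx
  refine ⟨fun x => ⋃ j ∈ {j | Relation.ReflTransGen Rel (idx x) j}, v j, ?_, ?_, ?_, ?_⟩
  · exact fun x => mem_biUnion Relation.ReflTransGen.refl (hidx x)
  · exact fun x => isOpen_biUnion fun j _ => vo j
  · intro x
    have hvsc : ∀ j, IsSigmaCompact (v j) := by
      intro j
      haveI : SecondCountableTopology ↥(v j) :=
        (((hvcl j).isSeparable).mono subset_closure).secondCountableTopology
      haveI : LocallyCompactSpace ↥(v j) := (vo j).locallyCompactSpace
      exact isSigmaCompact_iff_sigmaCompactSpace.2 inferInstance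
    exact isSigmaCompact_biUnion
      (aux_countable_reachable _ _ fun b => (hbranch b).countable)
      (fun j _ => hvsc j)
  · intro x y hy
    simp only [mem_iUnion] at hy
    obtain ⟨j, hj, hyj⟩ := hy
    have h1 : Relation.ReflTransGen Rel (idx x) (idx y) :=
      Relation.ReflTransGen.tail hj ⟨y, hyj, hidx y⟩
    ext z
    simp only [mem_iUnion, mem_setOf_eq]
    constructor
    · rintro ⟨k, hk, hzk⟩
      exact ⟨k, (hRTGsymm h1).trans hk, hzk⟩
    · rintro ⟨k, hk, hzk⟩
      exact ⟨k, h1.trans hk, hzk⟩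

end Auxiliary

section Main

open Set Topology TopologicalSpace

/-- A perfect action of a countable discrete group on a locally compact metrizable space
has a metrizable orbit space. -/
theorem stmt2 {G X : Type*} [Group G] [Countable G] [TopologicalSpace X]
    [LocallyCompactSpace X] [TopologicalSpace.MetrizableSpace X]
    [MulAction G X] [FaithfulSMul G X] [ContinuousConstSMul G X]
    (hperfect : ∀ U V : Set X, IsCompact U → IsCompact V →
      {g : G | (g • U ∩ V).Nonempty}.Finite) :
    TopologicalSpace.MetrizableSpace (Quotient (MulAction.orbitRel G X)) := by
  classical
  haveI : ProperlyDiscontinuousSMul G X := by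
    constructor
    intro K L hK hL
    apply (hperfect K L hK hL).subset
    intro g hg
    rw [mem_setOf_eq, Set.image_smul] at hg
    exact hg
  set Q := Quotient (MulAction.orbitRel G X) with hQ
  set p : X → Q := Quotient.mk (MulAction.orbitRel G X) with hp'
  have hp : IsOpenQuotientMap p := MulAction.isOpenQuotientMap_quotientMk
  haveI : LocallyCompactSpace Q := hp.locallyCompactSpace
  haveI : T2Space Q := inferInstanceAs (T2Space (Quotient (MulAction.orbitRel G X)))
  obtain ⟨comp, hmem, hopen, hsig, hglue⟩ := aux_decomp (X := X)
  -- finitely many pieces meet a compact set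
  have hpiece_fin : ∀ C : Set X, IsCompact C →
      {s : Set X | (∃ y, s = comp y) ∧ (s ∩ C).Nonempty}.Finite := by
    intro C hC
    obtain ⟨t, _, htcov⟩ := hC.elim_nhds_subcover comp
      (fun x _ => (hopen x).mem_nhds (hmem x))
    apply (t.finite_toSet.image comp).subset
    rintro s ⟨⟨y, rfl⟩, z, hzs, hzC⟩
    have : z ∈ ⋃ x ∈ t, comp x := htcov hzC
    simp only [mem_iUnion] at this
    obtain ⟨x, hxt, hzx⟩ := this
    exact ⟨x, hxt, (hglue x z hzx).trans (hglue y z hzs).symm⟩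
  -- compact neighborhoods inside pieces
  have hN : ∀ x : X, ∃ N, N ∈ 𝓝 x ∧ N ⊆ comp x ∧ IsCompact N := fun x =>
    local_compact_nhds ((hopen x).mem_nhds (hmem x))
  choose N hNx hNsub hNc using hN
  set O : X → Set Q := fun x => p '' interior (N x) with hO
  have hOopen : ∀ x, IsOpen (O x) := fun x => hp.isOpenMap _ isOpen_interior
  have hmemO : ∀ x, p x ∈ O x := fun x =>
    ⟨x, mem_interior_iff_mem_nhds.2 (hNx x), rfl⟩
  set R : Q → Q → Prop := fun a b => ∃ x, a ∈ O x ∧ b ∈ O x with hR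
  have hRsymm : Symmetric R := fun a b ⟨x, h1, h2⟩ => ⟨x, h2, h1⟩
  have hRTGsymm : Symmetric (Relation.ReflTransGen R) := fun a b h =>
    (@Relation.ReflTransGen.symmetric _ R ⟨fun a b h => hRsymm h⟩).symm a b h
  set cl : Q → Set Q := fun a => {b | Relation.ReflTransGen R a b} with hcl
  have hclmem : ∀ a, a ∈ cl a := fun a => Relation.ReflTransGen.refl
  have hclglue : ∀ a b, b ∈ cl a → cl a = cl b := by
    intro a b hab
    ext c
    exact ⟨fun hc => (hRTGsymm hab).trans hc, fun hc => hab.trans hc⟩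
  have hclopen : ∀ a, IsOpen (cl a) := by
    intro a
    rw [isOpen_iff_forall_mem_open]
    intro b hb
    obtain ⟨x, rfl⟩ := hp.surjective b
    refine ⟨O x, ?_, hOopen x, hmemO x⟩
    intro c hc
    exact hb.tail ⟨x, hmemO x, hc⟩
  -- each class is metrizable
  have hclmetr : ∀ a, MetrizableSpace (cl a) := by
    intro a
    obtain ⟨x₀, rfl⟩ := hp.surjective a
    set PR : Set X → Set X → Prop := fun s t =>
      (∃ y, s = comp y) ∧ (∃ y, t = comp y) ∧ ∃ g : G, ((g • s) ∩ t).Nonempty with hPR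
    have hPRbranch : ∀ s, {t | PR s t}.Countable := by
      intro s
      by_cases hs : ∃ y, s = comp y
      · obtain ⟨y, rfl⟩ := hs
        obtain ⟨Kn, hKnc, hKneq⟩ := hsig y
        have hsub : {t | PR (comp y) t} ⊆
            ⋃ (g : G) (n : ℕ),
              {t : Set X | (∃ y, t = comp y) ∧ (t ∩ (g • Kn n)).Nonempty} := by
          rintro t ⟨_, hpt, g, z, hzs, hzt⟩
          obtain ⟨w, hw, rfl⟩ := hzs
          rw [← hKneq] at hw
          simp only [mem_iUnion] at hw ⊢
          obtain ⟨n, hn⟩ := hw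
          exact ⟨g, n, hpt, ⟨g • w, hzt, ⟨w, hn, rfl⟩⟩⟩
        apply Set.Countable.mono hsub
        apply countable_iUnion fun g => countable_iUnion fun n => ?_
        exact (hpiece_fin _ ((hKnc n).smul g)).countable
      · have : {t | PR s t} = ∅ := by
          ext t
          simp only [mem_setOf_eq, mem_empty_iff_false, iff_false]
          rintro ⟨h1, -, -⟩
          exact hs h1
        rw [this]
        exact countable_empty
    have hScnt : {s | Relation.ReflTransGen PR (comp x₀) s}.Countable :=
      aux_countable_reachable PR (comp x₀) hPRbranch
    set S := {s | Relation.ReflTransGen PR (comp x₀) s} with hS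
    have hSpiece : ∀ s ∈ S, ∃ y, s = comp y := by
      intro s hs
      induction hs with
      | refl => exact ⟨x₀, rfl⟩
      | tail _ hr _ => exact hr.2.1
    set A := ⋃₀ S with hA
    have hAopen : IsOpen A := isOpen_sUnion fun s hs => by
      obtain ⟨y, rfl⟩ := hSpiece s hs
      exact hopen y
    have hAsc : SecondCountableTopology ↥A := by
      apply aux_sc_sUnion hScnt
      · intro s hs
        obtain ⟨y, rfl⟩ := hSpiece s hs
        exact hopen y
      · intro s hs
        obtain ⟨y, rfl⟩ := hSpiece s hs
        letI : MetricSpace X := metrizableSpaceMetric X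
        obtain ⟨Kn, hKnc, hKneq⟩ := hsig y
        have : IsSeparable (comp y) := by
          rw [← hKneq]
          exact isSeparable_iUnion.2 fun n => (hKnc n).isSeparable
        exact this.secondCountableTopology
    -- the class is contained in p '' A
    have hsub : cl (p x₀) ⊆ p '' A := by
      intro b hb
      induction hb with
      | refl => exact ⟨x₀, ⟨comp x₀, Relation.ReflTransGen.refl, hmem x₀⟩, rfl⟩
      | tail _ hr ih =>
        rename_i b' c' hab
        obtain ⟨x, hbO, hcO⟩ := hr
        obtain ⟨a', ⟨s, hsS, ha's⟩, hpa'⟩ := ih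
        obtain ⟨w, hw, hpw⟩ := hbO
        have horb : ∃ g : G, g • a' = w := by
          have : p w = p a' := hpw.trans hpa'.symm
          rw [hp', Quotient.eq] at this
          exact MulAction.mem_orbit_iff.1 this
        obtain ⟨g, rfl⟩ := horb
        have hstep : PR s (comp x) :=
          ⟨hSpiece s hsS, ⟨x, rfl⟩,
            g, ⟨g • a', ⟨a', ha's, rfl⟩, hNsub x (interior_subset hw)⟩⟩
        have hcompxS : comp x ∈ S := Relation.ReflTransGen.tail hsS hstep
        obtain ⟨z, hz, hpz⟩ := hcO
        exact ⟨z, ⟨comp x, hcompxS, hNsub x (interior_subset hz)⟩, hpz⟩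
    haveI : SecondCountableTopology ↥(p '' A) :=
      aux_sc_image hp.continuous hp.isOpenMap hAopen hAsc
    haveI : SecondCountableTopology ↥(cl (p x₀)) :=
      aux_sc_subset hsub ‹_›
    haveI : T3Space ↥(cl (p x₀)) := ⟨⟩
    exact metrizableSpace_of_t3_secondCountable _
  exact aux_metrizable_of_partition cl hclmem hclopen hclglue hclmetr

end Main
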